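/- Let A₊ be a symmetric complex n×n matrix whose imaginary part Im A₊ is positive definite. Then: (i) the matrix I − iA₊ is invertible; (ii) the matrix B = (I − iA₊)^{−1} A₊ is symmetric; (iii) the linear map κ : ℂ^{2n} → ℂ^{2n}, κ(y,η) = (y − iη, η + iBη − By), maps the subspace { (y, −iy) : y ∈ ℂⁿ } into { (x,ξ) ∈ ℂ^{2n} : x = 0 } and maps the subspace { (y, A₊y) : y ∈ ℂⁿ } into { (x,ξ) ∈ ℂ^{2n} : ξ = 0 }. -/

import Mathlib

/-- Let `A₊` be a symmetric complex `n×n` matrix with `Im A₊` positive definite.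
Then (i) `I − iA₊` is invertible; (ii) `B = (I − iA₊)⁻¹A₊` is symmetric;
(iii) the map `κ(y,η) = (y − iη, η + iBη − By)` sends `{(y, −iy)}` into
`{x = 0}` and `{(y, A₊y)}` into `{ξ = 0}`. -/
theorem statement_19 {n : ℕ} (Ap : Matrix (Fin n) (Fin n) ℂ) (hAp : Ap.IsSymm)
    (hIm : (Matrix.of fun j k => (Ap j k).im).PosDef) :
    IsUnit (1 - Complex.I • Ap) ∧
    ((1 - Complex.I • Ap)⁻¹ * Ap).IsSymm ∧
    (∀ y η : Fin n → ℂ, η = -(Complex.I • y) → y - Complex.I • η = 0) ∧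
    (∀ y η : Fin n → ℂ, η = Ap.mulVec y →
      η + Complex.I • ((1 - Complex.I • Ap)⁻¹ * Ap).mulVec η
        - ((1 - Complex.I • Ap)⁻¹ * Ap).mulVec y = 0) := by
  set S : Matrix (Fin n) (Fin n) ℝ := Matrix.of fun j k => (Ap j k).im with hS
  set M : Matrix (Fin n) (Fin n) ℂ := 1 - Complex.I • Ap with hM
  have hsymm : ∀ j k, Ap k j = Ap j k := fun j k => congrFun (congrFun hAp j) k
  -- kernel of M is trivial
  have hker : ∀ v : Fin n → ℂ, M.mulVec v = 0 → v = 0 := by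
    intro v hv
    by_contra hvne
    have hv' : v = Complex.I • Ap.mulVec v := by
      rw [hM, Matrix.sub_mulVec, Matrix.one_mulVec, Matrix.smul_mulVec,
        sub_eq_zero] at hv
      exact hv
    have hw : Ap.mulVec v = -(Complex.I • v) := by
      funext j
      have h := congrFun hv' j
      simp only [Pi.smul_apply, smul_eq_mul, Pi.neg_apply] at h ⊢
      rw [h]
      simp [← mul_assoc, Complex.I_mul_I]
    -- the quadratic form
    have him1 : dotProduct (star v) (Ap.mulVec v) = -Complex.I * (dotProduct (star v) v) := by
      rw [hw]
      simp [dotProduct, Finset.mul_sum]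
      exact Finset.sum_congr rfl fun j _ => by ring
    have hN : dotProduct (star v) v = ((∑ j, Complex.normSq (v j) : ℝ) : ℂ) := by
      push_cast
      simp [dotProduct, Complex.normSq_eq_conj_mul_self]
    have himL : (dotProduct (star v) (Ap.mulVec v)).im = -(∑ j, Complex.normSq (v j)) := by
      rw [him1, hN]
      simp
    -- expansion of the imaginary part
    have hexp : (dotProduct (star v) (Ap.mulVec v)).im
        = ∑ j, ∑ k, ((Ap j k).im * ((v j).re * (v k).re + (v j).im * (v k).im)
            + (Ap j k).re * ((v j).re * (v k).im - (v j).im * (v k).re)) := by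
      rw [dotProduct, Complex.im_sum]
      refine Finset.sum_congr rfl fun j _ => ?_
      rw [Matrix.mulVec, dotProduct, Finset.mul_sum, Complex.im_sum]
      refine Finset.sum_congr rfl fun k _ => ?_
      simp [Complex.mul_im, Complex.mul_re]
      ring
    have hcancel : ∑ j, ∑ k, (Ap j k).re * ((v j).re * (v k).im - (v j).im * (v k).re) = 0 := by
      have h1 : ∑ j, ∑ k, (Ap j k).re * ((v j).re * (v k).im)
          = ∑ j, ∑ k, (Ap j k).re * ((v j).im * (v k).re) := by
        rw [Finset.sum_comm]
        refine Finset.sum_congr rfl fun j _ => Finset.sum_congr rfl fun k _ => ?_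
        rw [hsymm]
        ring
      simp only [mul_sub, Finset.sum_sub_distrib]
      rw [h1, sub_self]
    set a : Fin n → ℝ := fun j => (v j).re with ha
    set b : Fin n → ℝ := fun j => (v j).im with hb
    have hquad : ∑ j, ∑ k, (Ap j k).im * ((v j).re * (v k).re + (v j).im * (v k).im)
        = dotProduct a (S.mulVec a) + dotProduct b (S.mulVec b) := by
      simp only [dotProduct, Matrix.mulVec, Matrix.of_apply, hS, Finset.mul_sum,
        ← Finset.sum_add_distrib, ha, hb]
      exact Finset.sum_congr rfl fun j _ => Finset.sum_congr rfl fun k _ => by ring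
    have hkey : -(∑ j, Complex.normSq (v j)) = dotProduct a (S.mulVec a) + dotProduct b (S.mulVec b) := by
      rw [← himL, hexp]
      simp only [Finset.sum_add_distrib]
      rw [hcancel, add_zero, hquad]
    -- positivity
    have hNe : ∃ j, v j ≠ 0 := Function.ne_iff.mp hvne
    obtain ⟨j0, hj0⟩ := hNe
    have hNpos : 0 < ∑ j, Complex.normSq (v j) :=
      Finset.sum_pos' (fun j _ => Complex.normSq_nonneg _)
        ⟨j0, Finset.mem_univ _, Complex.normSq_pos.mpr hj0⟩
    have hab : a ≠ 0 ∨ b ≠ 0 := by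
      by_contra h
      push_neg at h
      exact hvne (funext fun j => Complex.ext (congrFun h.1 j) (congrFun h.2 j))
    have hQpos : 0 < dotProduct a (S.mulVec a) + dotProduct b (S.mulVec b) := by
      have hsa : 0 ≤ dotProduct a (S.mulVec a) := by
        have := hIm.posSemidef.dotProduct_mulVec_nonneg a
        simpa using this
      have hsb : 0 ≤ dotProduct b (S.mulVec b) := by
        have := hIm.posSemidef.dotProduct_mulVec_nonneg b
        simpa using this
      rcases hab with h | h
      · have := hIm.dotProduct_mulVec_pos h
        simp only [star_trivial] at this
        linarith
      · have := hIm.dotProduct_mulVec_pos h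
        simp only [star_trivial] at this
        linarith
    linarith [hkey, hNpos, hQpos]
  have hdet : M.det ≠ 0 := by
    intro h
    obtain ⟨v, hvne, hv⟩ := Matrix.exists_mulVec_eq_zero_iff.mpr h
    exact hvne (hker v hv)
  have hdetU : IsUnit M.det := isUnit_iff_ne_zero.mpr hdet
  have hU : IsUnit M := (Matrix.isUnit_iff_isUnit_det M).mpr hdetU
  have hinv1 : M * M⁻¹ = 1 := Matrix.mul_nonsing_inv M hdetU
  have hinv2 : M⁻¹ * M = 1 := Matrix.nonsing_inv_mul M hdetU
  have hMt : M.transpose = M := by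
    rw [hM]
    simp [Matrix.transpose_sub, Matrix.transpose_smul]
    rw [hAp]
  have hcomm : Ap * M = M * Ap := by
    rw [hM]
    simp [Matrix.mul_sub, Matrix.sub_mul, Matrix.mul_smul, Matrix.smul_mul]
  have hcomm' : Ap * M⁻¹ = M⁻¹ * Ap := by
    calc Ap * M⁻¹ = 1 * (Ap * M⁻¹) := (one_mul _).symm
      _ = M⁻¹ * M * (Ap * M⁻¹) := by rw [hinv2]
      _ = M⁻¹ * ((M * Ap) * M⁻¹) := by simp only [mul_assoc]
      _ = M⁻¹ * ((Ap * M) * M⁻¹) := by rw [hcomm]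
      _ = M⁻¹ * Ap * (M * M⁻¹) := by simp only [mul_assoc]
      _ = M⁻¹ * Ap := by rw [hinv1, mul_one]
  have hBsymm : (M⁻¹ * Ap).IsSymm := by
    unfold Matrix.IsSymm
    rw [Matrix.transpose_mul, Matrix.transpose_nonsing_inv, hMt, hAp, hcomm']
  refine ⟨hU, hBsymm, ?_, ?_⟩
  · intro y η hη
    subst hη
    funext j
    simp only [Pi.sub_apply, Pi.smul_apply, Pi.neg_apply, smul_eq_mul, Pi.zero_apply]
    linear_combination (y j) * Complex.I_mul_I
  · intro y η hη
    subst hη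
    set B := M⁻¹ * Ap with hB
    have hBM : B * M = Ap := by
      rw [hB, mul_assoc, hcomm, ← mul_assoc, hinv2, one_mul]
    have hBeq : B = Ap + Complex.I • (B * Ap) := by
      have h2 : B * M = B - Complex.I • (B * Ap) := by
        rw [hM]
        simp [Matrix.mul_sub, Matrix.mul_smul]
      rw [hBM] at h2
      exact (sub_eq_iff_eq_add.mp h2.symm)
    rw [Matrix.mulVec_mulVec, ← Matrix.smul_mulVec, ← Matrix.add_mulVec,
      ← Matrix.sub_mulVec, ← hBeq]
    simp
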